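/- Let n = 2 and A = {0,1}, and let P ⊆ 2{0,1}* be a finite joinless code. Then P is maximal as a joinless code if and only if P can be obtained from {(ε,ε)} by a finite sequence of one-step restrictions (equivalently, iff P has a parse tree). -/
import Mathlib


namespace BrinThompson

abbrev W (A : Type*) (n : ℕ) : Type _ := Fin n → List A

variable {A : Type*} {n : ℕ}

/-- Coordinatewise concatenation in `nA*`. -/
def cat (u x : W A n) : W A n := fun i => u i ++ x i

/-- `u ≤_init v` : `u` is an initial factor of `v`. -/
def initLE (u v : W A n) : Prop := ∃ x : W A n, v = cat u x

/-- `w` is the join (least upper bound) of `u` and `v` w.r.t. `≤_init`. -/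
def isJoin (u v w : W A n) : Prop :=
  initLE u w ∧ initLE v w ∧ ∀ z : W A n, initLE u z → initLE v z → initLE w z

/-- `u` and `v` have a join. -/
def HasJoin (u v : W A n) : Prop := ∃ w : W A n, isJoin u v w

/-- A joinless code: no two distinct elements have a join. -/
def JoinlessCode (S : Set (W A n)) : Prop :=
  ∀ u ∈ S, ∀ v ∈ S, u ≠ v → ¬ HasJoin u v

/-- A maximal joinless code: joinless, and every element of `nA*` has a join
with some element of the code. -/
def MaxJoinlessCode (S : Set (W A n)) : Prop :=
  JoinlessCode S ∧ ∀ x : W A n, ∃ p ∈ S, HasJoin x p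

/-- The right ideal `C · nA*` generated by `C`. -/
def genIdeal (C : Set (W A n)) : Set (W A n) := {w | ∃ c ∈ C, ∃ x : W A n, w = cat c x}

def IsRightIdeal (R : Set (W A n)) : Prop := genIdeal R = R

/-- An initial factor code: pairwise `≤_init`-incomparable set. -/
def InitFactorCode (S : Set (W A n)) : Prop :=
  ∀ u ∈ S, ∀ v ∈ S, initLE u v → u = v

/-- `A_{ε,n}`: tuples with one coordinate a single letter and the rest empty. -/
def Aeps (A : Type*) (n : ℕ) : Set (W A n) :=
  {w | ∃ i : Fin n, ∃ a : A, w i = [a] ∧ ∀ j : Fin n, j ≠ i → w j = []}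

/-- `(ε)^n`, the tuple of empty strings. -/
def epsn (A : Type*) (n : ℕ) : W A n := fun _ => []

/-- `nA^ω`: `n`-tuples of one-sided infinite sequences over `A`. -/
abbrev Winf (A : Type*) (n : ℕ) : Type _ := Fin n → ℕ → A

/-- Concatenation of a finite tuple `p ∈ nA*` with an infinite tuple `u ∈ nA^ω`. -/
def catInf (p : W A n) (u : Winf A n) : Winf A n :=
  fun i k => if h : k < (p i).length then (p i).get ⟨k, h⟩ else u i (k - (p i).length)

/-- `v` is an interior vertex of the `P`-dag: a strict initial factor of
some element of `P`. -/
def Interior (P : Set (W A n)) (v : W A n) : Prop := ∃ p ∈ P, initLE v p ∧ v ≠ p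

/-- The child of `v` in direction `i`, extended by letter `a`. -/
def child (v : W A n) (i : Fin n) (a : A) : W A n := Function.update v i (v i ++ [a])

/-- A leaf of the interior dag of `P`: an interior vertex none of whose
children is interior. -/
def InteriorLeaf (P : Set (W A n)) (v : W A n) : Prop :=
  Interior P v ∧ ∀ (i : Fin n) (a : A), ¬ Interior P (child v i a)

/-- `v_+ = (v · A_{ε,n}) ∩ P`, the set of children of `v` belonging to `P`. -/
def vplus (P : Set (W A n)) (v : W A n) : Set (W A n) :=
  {w | (∃ (i : Fin n) (a : A), w = child v i a) ∧ w ∈ P}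

/-- The depth of a vertex: the sum of the coordinate lengths. -/
def depth (v : W A n) : ℕ := ∑ i, (v i).length

/-- One-step restriction of `P` at `(p, i)`. -/
def oneStep (P : Set (W A n)) (p : W A n) (i : Fin n) : Set (W A n) :=
  (P \ {p}) ∪ {w | ∃ a : A, w = child p i a}

/-- One step in a sequence of one-step restrictions. -/
def RestrStep (P Q : Set (W A n)) : Prop := ∃ p ∈ P, ∃ i : Fin n, Q = oneStep P p i

/-- The box code `A^{k_1} × … × A^{k_n}`. -/
def box (A : Type*) {n : ℕ} (k : Fin n → ℕ) : Set (W A n) :=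
  {w | ∀ i : Fin n, (w i).length = k i}

/-- Elementwise join `P ∨ Q` of two sets, ranging over the joins that exist. -/
def setJoin (P Q : Set (W A n)) : Set (W A n) :=
  {w | ∃ p ∈ P, ∃ q ∈ Q, isJoin p q w}

/-- `ℓ(S)`: the maximum coordinate length occurring in `S`. -/
noncomputable def ell (S : Set (W A n)) : ℕ :=
  sSup {m | ∃ z ∈ S, ∃ i : Fin n, (z i).length = m}

/-- An element of `n RI^fin_A`: an injective right ideal morphism of `nA*`
whose domain code and image code are finite maximal joinless codes.
`toFun` is a total function whose values outside `Dom` are irrelevant. -/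
structure RIMfin (A : Type*) (n : ℕ) where
  Dom : Set (W A n)
  toFun : W A n → W A n
  domC : Set (W A n)
  imC : Set (W A n)
  ideal : IsRightIdeal Dom
  morph : ∀ x ∈ Dom, ∀ w : W A n, toFun (cat x w) = cat (toFun x) w
  inj : Set.InjOn toFun Dom
  domC_gen : genIdeal domC = Dom
  imC_gen : genIdeal imC = toFun '' Dom
  domC_fin : domC.Finite
  domC_max : MaxJoinlessCode domC
  imC_fin : imC.Finite
  imC_max : MaxJoinlessCode imC

/-- `ℓ(f) = max{ℓ(z) : z ∈ domC(f) ∪ imC(f)}`. -/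
noncomputable def ellF (F : RIMfin A n) : ℕ := ell (F.domC ∪ F.imC)

/-- `G` extends `F` (as partial functions). -/
def Extends (F G : RIMfin A n) : Prop :=
  F.Dom ⊆ G.Dom ∧ ∀ x ∈ F.Dom, G.toFun x = F.toFun x

/-- `F` and `G` are equal as partial functions. -/
def EquivRIM (F G : RIMfin A n) : Prop :=
  F.Dom = G.Dom ∧ ∀ x ∈ F.Dom, F.toFun x = G.toFun x

/-- `G` is a maximal extension of `F` in `n RI^fin_A`. -/
def MaxExtension (F G : RIMfin A n) : Prop :=
  Extends F G ∧ ∀ H : RIMfin A n, Extends G H → EquivRIM G H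

section Helpers

variable {A : Type*} {n : ℕ}

lemma initLE_iff {u v : W A n} : initLE u v ↔ ∀ i, u i <+: v i := by
  constructor
  · rintro ⟨x, rfl⟩ i; exact ⟨x i, rfl⟩
  · intro h
    refine ⟨fun i => (v i).drop (u i).length, funext fun i => ?_⟩
    obtain ⟨t, ht⟩ := h i
    simp [cat, ← ht]

lemma hasJoin_iff {u v : W A n} : HasJoin u v ↔ ∀ i, u i <+: v i ∨ v i <+: u i := by
  classical
  constructor
  · rintro ⟨w, hu, hv, -⟩ i
    rw [initLE_iff] at hu hv
    exact List.prefix_or_prefix_of_prefix (hu i) (hv i)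
  · intro h
    refine ⟨fun i => if u i <+: v i then v i else u i, ?_, ?_, ?_⟩
    · rw [initLE_iff]; intro i
      by_cases hc : u i <+: v i
      · simpa [hc] using hc
      · simp [hc]
    · rw [initLE_iff]; intro i
      by_cases hc : u i <+: v i
      · simp [hc]
      · rcases h i with h1 | h1
        · exact absurd h1 hc
        · simpa [hc] using h1
    · intro z hu hv
      rw [initLE_iff] at hu hv ⊢
      intro i
      by_cases hc : u i <+: v i
      · simpa [hc] using hv i
      · simpa [hc] using hu i

lemma hasJoin_symm {u v : W A n} (h : HasJoin u v) : HasJoin v u :=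
  hasJoin_iff.mpr fun i => (hasJoin_iff.mp h i).symm

lemma child_apply_same (v : W A n) (i : Fin n) (a : A) : child v i a i = v i ++ [a] :=
  Function.update_self _ _ _

lemma child_apply_ne (v : W A n) {i j : Fin n} (h : j ≠ i) (a : A) : child v i a j = v j :=
  Function.update_of_ne h _ _

lemma mem_oneStep_iff {Q : Set (W A n)} {p : W A n} {i : Fin n} {w : W A n} :
    w ∈ oneStep Q p i ↔ (w ∈ Q ∧ w ≠ p) ∨ ∃ a, w = child p i a := by
  simp [oneStep, Set.mem_diff, Set.mem_union, Set.mem_setOf_eq]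

lemma maxEps : MaxJoinlessCode ({epsn A n} : Set (W A n)) := by
  constructor
  · intro u hu v hv hne
    simp only [Set.mem_singleton_iff] at hu hv
    exact absurd (hu.trans hv.symm) hne
  · intro x
    exact ⟨epsn A n, rfl, hasJoin_iff.mpr fun i => Or.inr List.nil_prefix⟩

lemma max_preserved [Inhabited A] {Q Q' : Set (W A n)} (hQ : MaxJoinlessCode Q)
    (h : RestrStep Q Q') : MaxJoinlessCode Q' := by
  obtain ⟨p, hp, i, rfl⟩ := h
  have key : ∀ (a : A) (u : W A n), u ∈ Q → u ≠ p → HasJoin u (child p i a) → False := by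
    intro a u huQ hup hj
    apply hQ.1 u huQ p hp hup
    rw [hasJoin_iff] at hj ⊢
    intro j
    rcases eq_or_ne j i with rfl | hji
    · have hc := hj j
      rw [child_apply_same] at hc
      rcases hc with h1 | h1
      · rcases List.prefix_concat_iff.mp h1 with h2 | h2
        · exact Or.inr (h2 ▸ List.prefix_append _ _)
        · exact Or.inl h2
      · exact Or.inr ((List.prefix_append _ _).trans h1)
    · have hc := hj j
      rwa [child_apply_ne _ hji] at hc
  constructor
  · intro u hu v hv hne hj
    rw [mem_oneStep_iff] at hu hv
    rcases hu with ⟨huQ, hup⟩ | ⟨a, rfl⟩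
    · rcases hv with ⟨hvQ, hvp⟩ | ⟨a, rfl⟩
      · exact hQ.1 u huQ v hvQ hne hj
      · exact key a u huQ hup hj
    · rcases hv with ⟨hvQ, hvp⟩ | ⟨b, rfl⟩
      · exact key a v hvQ hvp (hasJoin_symm hj)
      · have hc := hasJoin_iff.mp hj i
        rw [child_apply_same, child_apply_same] at hc
        have hab : a = b := by
          rcases hc with h1 | h1
          · have := h1.eq_of_length (by simp)
            simpa using this
          · have := h1.eq_of_length (by simp)
            simpa using this.symm
        exact hne (by rw [hab])
  · intro x
    obtain ⟨q, hq, hxq⟩ := hQ.2 x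
    have hxq' := hasJoin_iff.mp hxq
    rcases eq_or_ne q p with rfl | hqp
    · have mk : ∀ a : A, (x i <+: q i ++ [a] ∨ q i ++ [a] <+: x i) →
          ∃ p' ∈ oneStep Q q i, HasJoin x p' := by
        intro a hcomp
        refine ⟨child q i a, mem_oneStep_iff.mpr (Or.inr ⟨a, rfl⟩), hasJoin_iff.mpr fun j => ?_⟩
        rcases eq_or_ne j i with rfl | hji
        · rw [child_apply_same]; exact hcomp
        · rw [child_apply_ne _ hji]; exact hxq' j
      rcases hxq' i with h1 | h1
      · exact mk default (Or.inl (h1.trans (List.prefix_append _ _)))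
      · obtain ⟨t, ht⟩ := h1
        cases t with
        | nil =>
          refine mk default (Or.inl ?_)
          rw [← ht]; simp
        | cons a t' =>
          refine mk a (Or.inr ⟨t', ?_⟩)
          rw [← ht]; simp
    · exact ⟨q, mem_oneStep_iff.mpr (Or.inl ⟨hq, hqp⟩), hxq⟩

end Helpers
section Lift

/-- Prepend letter `a` to coordinate `i`. -/
def lift (i : Fin 2) (a : Bool) (q : W Bool 2) : W Bool 2 :=
  Function.update q i (a :: q i)

lemma lift_apply_same (i : Fin 2) (a : Bool) (q : W Bool 2) : lift i a q i = a :: q i :=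
  Function.update_self _ _ _

lemma lift_apply_ne (i : Fin 2) (a : Bool) (q : W Bool 2) {j : Fin 2} (h : j ≠ i) :
    lift i a q j = q j :=
  Function.update_of_ne h _ _

lemma lift_injective (i : Fin 2) (a : Bool) : Function.Injective (lift i a) := by
  intro q q' h
  funext j
  rcases eq_or_ne j i with rfl | hj
  · have := congrFun h j
    rw [lift_apply_same, lift_apply_same] at this
    exact List.tail_eq_of_cons_eq this
  · have := congrFun h j
    rwa [lift_apply_ne _ _ _ hj, lift_apply_ne _ _ _ hj] at this

lemma lift_child (i : Fin 2) (a : Bool) (q : W Bool 2) (i' : Fin 2) (b : Bool) :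
    lift i a (child q i' b) = child (lift i a q) i' b := by
  funext j
  rcases eq_or_ne j i with rfl | hji
  · rcases eq_or_ne j i' with rfl | hji'
    · rw [lift_apply_same, child_apply_same, child_apply_same, lift_apply_same]
      simp
    · rw [lift_apply_same, child_apply_ne _ hji', child_apply_ne _ hji', lift_apply_same]
  · rcases eq_or_ne j i' with rfl | hji'
    · rw [lift_apply_ne _ _ _ hji, child_apply_same, child_apply_same,
        lift_apply_ne _ _ _ hji]
    · rw [lift_apply_ne _ _ _ hji, child_apply_ne _ hji', child_apply_ne _ hji',
        lift_apply_ne _ _ _ hji]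

lemma step_lift {L : W Bool 2 → W Bool 2}
    (hL : ∀ p i a, L (child p i a) = child (L p) i a)
    (hinj : Function.Injective L)
    {Q Q' : Set (W Bool 2)} (h : RestrStep Q Q')
    (S : Set (W Bool 2)) (hS : ∀ q, L q ∉ S) :
    RestrStep (S ∪ L '' Q) (S ∪ L '' Q') := by
  obtain ⟨p, hp, i, rfl⟩ := h
  refine ⟨L p, Or.inr ⟨p, hp, rfl⟩, i, ?_⟩
  ext w
  constructor
  · rintro (hw | ⟨q, hq, rfl⟩)
    · exact mem_oneStep_iff.mpr (Or.inl ⟨Or.inl hw, fun he => hS p (he ▸ hw)⟩)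
    · rcases mem_oneStep_iff.mp hq with ⟨hqQ, hqp⟩ | ⟨a, rfl⟩
      · exact mem_oneStep_iff.mpr (Or.inl ⟨Or.inr ⟨q, hqQ, rfl⟩, fun he => hqp (hinj he)⟩)
      · exact mem_oneStep_iff.mpr (Or.inr ⟨a, hL _ _ _⟩)
  · intro hw
    rcases mem_oneStep_iff.mp hw with ⟨hw1, hw2⟩ | ⟨a, rfl⟩
    · rcases hw1 with hw1 | ⟨q, hq, rfl⟩
      · exact Or.inl hw1
      · exact Or.inr ⟨q, mem_oneStep_iff.mpr (Or.inl ⟨hq, fun he => hw2 (by rw [he])⟩), rfl⟩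
    · exact Or.inr ⟨child p i a, mem_oneStep_iff.mpr (Or.inr ⟨a, rfl⟩), hL _ _ _⟩

lemma rtg_lift {L : W Bool 2 → W Bool 2}
    (hL : ∀ p i a, L (child p i a) = child (L p) i a)
    (hinj : Function.Injective L)
    {Q Q' : Set (W Bool 2)} (h : Relation.ReflTransGen RestrStep Q Q')
    (S : Set (W Bool 2)) (hS : ∀ q, L q ∉ S) :
    Relation.ReflTransGen RestrStep (S ∪ L '' Q) (S ∪ L '' Q') := by
  induction h with
  | refl => exact .refl
  | tail _ hstep ih => exact ih.tail (step_lift hL hinj hstep S hS)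

end Lift
section Strip

lemma lift_head {p : W Bool 2} {i : Fin 2} {b : Bool} {t : List Bool} (hpi : p i = b :: t) :
    lift i b (Function.update p i t) = p := by
  funext j
  rcases eq_or_ne j i with rfl | hj
  · rw [lift_apply_same, Function.update_self, hpi]
  · rw [lift_apply_ne _ _ _ hj, Function.update_of_ne hj]

lemma strip_joinless {P : Set (W Bool 2)} (i : Fin 2) (a : Bool) (hP : JoinlessCode P) :
    JoinlessCode {q : W Bool 2 | lift i a q ∈ P} := by
  intro u hu v hv hne hj
  apply hP _ hu _ hv (fun h => hne (lift_injective i a h))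
  rw [hasJoin_iff] at hj ⊢
  intro j
  rcases eq_or_ne j i with rfl | hji
  · rw [lift_apply_same, lift_apply_same]
    rcases hj j with h1 | h1
    · exact Or.inl (List.cons_prefix_cons.mpr ⟨rfl, h1⟩)
    · exact Or.inr (List.cons_prefix_cons.mpr ⟨rfl, h1⟩)
  · rw [lift_apply_ne _ _ _ hji, lift_apply_ne _ _ _ hji]
    exact hj j

lemma strip_max {P : Set (W Bool 2)} (i : Fin 2) (a : Bool) (hP : MaxJoinlessCode P)
    (hne : ∀ p ∈ P, p i ≠ []) :
    MaxJoinlessCode {q : W Bool 2 | lift i a q ∈ P} := by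
  refine ⟨strip_joinless i a hP.1, ?_⟩
  intro x
  obtain ⟨p, hp, hj⟩ := hP.2 (lift i a x)
  have hj' := hasJoin_iff.mp hj
  cases hpi : p i with
  | nil => exact absurd hpi (hne p hp)
  | cons b t =>
    have hcompi : t <+: x i ∨ x i <+: t := by
      have hc := hj' i
      rw [lift_apply_same, hpi] at hc
      rcases hc with h1 | h1
      · rcases List.cons_prefix_cons.mp h1 with ⟨hab, h2⟩
        exact Or.inr h2
      · rcases List.cons_prefix_cons.mp h1 with ⟨hab, h2⟩
        exact Or.inl h2
    have hba : b = a := by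
      have hc := hj' i
      rw [lift_apply_same, hpi] at hc
      rcases hc with h1 | h1
      · exact (List.cons_prefix_cons.mp h1).1.symm
      · exact (List.cons_prefix_cons.mp h1).1
    subst hba
    refine ⟨Function.update p i t, ?_, ?_⟩
    · show lift i b (Function.update p i t) ∈ P
      rw [lift_head hpi]; exact hp
    · refine hasJoin_iff.mpr fun j => ?_
      rcases eq_or_ne j i with rfl | hji
      · rw [Function.update_self]
        exact hcompi.symm
      · rw [Function.update_of_ne hji]
        have hc := hj' j
        rwa [lift_apply_ne _ _ _ hji] at hc

lemma child_eps (i : Fin 2) (a : Bool) :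
    child (epsn Bool 2) i a = lift i a (epsn Bool 2) := by
  funext j
  rcases eq_or_ne j i with rfl | hj
  · rw [child_apply_same, lift_apply_same]; rfl
  · rw [child_apply_ne _ hj, lift_apply_ne _ _ _ hj]

end Strip
section Main

lemma reach_of_max : ∀ (N : ℕ) (P : Set (W Bool 2)), P.Finite → P.ncard ≤ N →
    MaxJoinlessCode P → Relation.ReflTransGen RestrStep {epsn Bool 2} P := by
  intro N
  induction N with
  | zero =>
    intro P hfin hcard hmax
    obtain ⟨p, hp, -⟩ := hmax.2 (epsn Bool 2)
    have hP0 : P = ∅ := (Set.ncard_eq_zero hfin).mp (Nat.le_zero.mp hcard)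
    exact absurd hp (by simp [hP0])
  | succ N ih =>
    intro P hfin hcard hmax
    by_cases heps : epsn Bool 2 ∈ P
    · have hPe : P = {epsn Bool 2} := by
        apply Set.eq_singleton_iff_unique_mem.mpr
        refine ⟨heps, fun q hq => ?_⟩
        by_contra hne
        exact hmax.1 q hq _ heps hne (hasJoin_iff.mpr fun j => Or.inr List.nil_prefix)
      rw [hPe]
    · -- there is a coordinate where all elements of P are nonempty
      have hcoord : ∃ i : Fin 2, ∀ p ∈ P, p i ≠ [] := by
        by_contra hcon
        push_neg at hcon
        obtain ⟨p, hp, hp0⟩ := hcon 0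
        obtain ⟨r, hr, hr1⟩ := hcon 1
        have hpr : p = r := by
          by_contra hne
          apply hmax.1 p hp r hr hne
          refine hasJoin_iff.mpr fun j => ?_
          fin_cases j
          · exact Or.inl (hp0 ▸ List.nil_prefix)
          · exact Or.inr (hr1 ▸ List.nil_prefix)
        apply heps
        have hpeq : p = epsn Bool 2 := by
          funext j
          fin_cases j
          · exact hp0
          · exact hpr ▸ hr1
        exact hpeq ▸ hp
      obtain ⟨i, hne⟩ := hcoord
      have hfinst : ∀ a : Bool, Set.Finite {q : W Bool 2 | lift i a q ∈ P} :=
        fun a => Set.Finite.preimage ((lift_injective i a).injOn) hfin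
      have himg : ∀ a : Bool, lift i a '' {q : W Bool 2 | lift i a q ∈ P} ⊆ P := by
        rintro a w ⟨q, hq, rfl⟩; exact hq
      have hwit : ∀ a : Bool, ∃ r ∈ P, r ∉ lift i a '' {q : W Bool 2 | lift i a q ∈ P} := by
        intro a
        obtain ⟨r, hr, hjr⟩ := hmax.2 (Function.update (epsn Bool 2) i [!a])
        refine ⟨r, hr, ?_⟩
        rintro ⟨q, hq, rfl⟩
        have hc := hasJoin_iff.mp hjr i
        rw [Function.update_self, lift_apply_same] at hc
        rcases hc with h1 | h1
        · rcases List.cons_prefix_cons.mp h1 with ⟨hab, -⟩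
          simp at hab
        · rcases List.cons_prefix_cons.mp h1 with ⟨hab, -⟩
          simp at hab
      have hlt : ∀ a : Bool, ({q : W Bool 2 | lift i a q ∈ P}).ncard < P.ncard := by
        intro a
        obtain ⟨r, hr, hrim⟩ := hwit a
        have hss : lift i a '' {q : W Bool 2 | lift i a q ∈ P} ⊂ P :=
          (Set.ssubset_iff_of_subset (himg a)).mpr ⟨r, hr, hrim⟩
        have h1 := Set.ncard_lt_ncard hss hfin
        rwa [Set.ncard_image_of_injective _ (lift_injective i a)] at h1
      have reach : ∀ a : Bool,
          Relation.ReflTransGen RestrStep {epsn Bool 2} {q : W Bool 2 | lift i a q ∈ P} :=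
        fun a => ih _ (hfinst a) (Nat.lt_succ_iff.mp (lt_of_lt_of_le (hlt a) hcard))
          (strip_max i a hmax hne)
      have step1 : RestrStep {epsn Bool 2}
          (({lift i true (epsn Bool 2)} : Set (W Bool 2)) ∪ lift i false '' {epsn Bool 2}) := by
        refine ⟨epsn Bool 2, rfl, i, ?_⟩
        ext w
        simp only [Set.image_singleton, Set.mem_union, Set.mem_singleton_iff, mem_oneStep_iff]
        constructor
        · rintro (rfl | rfl)
          · exact Or.inr ⟨true, child_eps i true⟩
          · exact Or.inr ⟨false, child_eps i false⟩
        · rintro (⟨rfl, hne'⟩ | ⟨a, rfl⟩)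
          · exact absurd rfl hne'
          · cases a
            · exact Or.inr (child_eps i false)
            · exact Or.inl (child_eps i true)
      have hS1 : ∀ q, lift i false q ∉ ({lift i true (epsn Bool 2)} : Set (W Bool 2)) := by
        intro q hq
        rw [Set.mem_singleton_iff] at hq
        have hc := congrFun hq i
        rw [lift_apply_same, lift_apply_same] at hc
        simp at hc
      have hS2 : ∀ q, lift i true q ∉ lift i false '' {q : W Bool 2 | lift i false q ∈ P} := by
        rintro q ⟨q', -, hq'⟩
        have hc := congrFun hq' i
        rw [lift_apply_same, lift_apply_same] at hc
        simp at hc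
      have rtg1 := rtg_lift (lift_child i false) (lift_injective i false) (reach false)
          {lift i true (epsn Bool 2)} hS1
      have rtg2 := rtg_lift (lift_child i true) (lift_injective i true) (reach true)
          (lift i false '' {q : W Bool 2 | lift i false q ∈ P}) hS2
      have heq1 : ({lift i true (epsn Bool 2)} : Set (W Bool 2)) ∪
            lift i false '' {q : W Bool 2 | lift i false q ∈ P} =
          lift i false '' {q : W Bool 2 | lift i false q ∈ P} ∪
            lift i true '' {epsn Bool 2} := by
        rw [Set.image_singleton, Set.union_comm]
      have heq2 : lift i false '' {q : W Bool 2 | lift i false q ∈ P} ∪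
          lift i true '' {q : W Bool 2 | lift i true q ∈ P} = P := by
        apply Set.Subset.antisymm
        · rintro w (hw | hw)
          · exact himg false hw
          · exact himg true hw
        · intro p hp
          cases hpi : p i with
          | nil => exact absurd hpi (hne p hp)
          | cons b t =>
            have hfact := lift_head hpi
            cases b
            · exact Or.inl ⟨Function.update p i t,
                by rw [Set.mem_setOf_eq, hfact]; exact hp, hfact⟩
            · exact Or.inr ⟨Function.update p i t,
                by rw [Set.mem_setOf_eq, hfact]; exact hp, hfact⟩
      rw [heq2] at rtg2
      refine Relation.ReflTransGen.head step1 (rtg1.trans ?_)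
      rw [heq1]
      exact rtg2

end Main

/-- For `n = 2`, `A = {0,1}`: a finite joinless code is maximal iff it can be
obtained from `{(ε,ε)}` by a finite sequence of one-step restrictions. -/
theorem maxJoinless_iff_restrictions_from_eps {P : Set (W Bool 2)}
    (hfin : P.Finite) (hjl : JoinlessCode P) :
    MaxJoinlessCode P ↔
      Relation.ReflTransGen RestrStep {epsn Bool 2} P := by
  constructor
  · intro hmax
    exact reach_of_max P.ncard P hfin le_rfl hmax
  · intro h
    clear hfin hjl
    induction h with
    | refl => exact maxEps
    | tail _ hstep ih => exact max_preserved ih hstep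

end BrinThompson
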